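/- Let A, B ∈ M_ℓ(ℂ) be Hermitian positive definite and let λ ∈ (0,1). Then λ·log A + (1−λ)·log B ⪯ log(λA + (1−λ)B); that is, the logarithm is operator concave on positive definite matrices. -/

import Mathlib

open scoped ComplexOrder

/-- The logarithm of a Hermitian matrix, defined through the spectral theorem. -/
noncomputable def matLog {ℓ : ℕ} {A : Matrix (Fin ℓ) (Fin ℓ) ℂ}
    (hA : A.IsHermitian) : Matrix (Fin ℓ) (Fin ℓ) ℂ :=
  (hA.eigenvectorUnitary : Matrix (Fin ℓ) (Fin ℓ) ℂ) *
    Matrix.diagonal (fun i => (Real.log (hA.eigenvalues i) : ℂ)) *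
    star (hA.eigenvectorUnitary : Matrix (Fin ℓ) (Fin ℓ) ℂ)

namespace Matrix.PosSemidef

open scoped MatrixOrder

variable {n : Type*} [Fintype n] [DecidableEq n]

/-- Matrix square root of a PSD matrix (replacement for the removed Mathlib definition). -/
noncomputable def sqrt {A : Matrix n n ℂ} (_hA : A.PosSemidef) : Matrix n n ℂ := CFC.sqrt A

lemma posSemidef_sqrt {A : Matrix n n ℂ} (hA : A.PosSemidef) : hA.sqrt.PosSemidef :=
  Matrix.nonneg_iff_posSemidef.mp (CFC.sqrt_nonneg A)

lemma sqrt_mul_self {A : Matrix n n ℂ} (hA : A.PosSemidef) : hA.sqrt * hA.sqrt = A :=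
  CFC.sqrt_mul_sqrt_self A hA.nonneg

lemma eq_sqrt_of_sq_eq {A : Matrix n n ℂ} (hA : A.PosSemidef) {B : Matrix n n ℂ}
    (hB : B.PosSemidef) (hAB : A ^ 2 = B) : A = hB.sqrt :=
  ((CFC.sqrt_eq_iff B A hB.nonneg hA.nonneg).mpr (by rw [← hAB, sq])).symm

end Matrix.PosSemidef

namespace MatLogAux

open Matrix Filter Topology

variable {n : Type*} [Fintype n] [DecidableEq n]

lemma psd_smul_real {c : ℝ} (hc : 0 ≤ c) {M : Matrix n n ℂ} (hM : M.PosSemidef) :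
    ((c:ℂ) • M).PosSemidef := by
  refine PosSemidef.of_dotProduct_mulVec_nonneg ?_ ?_
  · rw [Matrix.IsHermitian, conjTranspose_smul, Complex.star_def, Complex.conj_ofReal, hM.1.eq]
  · intro x
    rw [smul_mulVec, dotProduct_smul, smul_eq_mul]
    exact mul_nonneg (by rwa [Complex.zero_le_real]) (hM.dotProduct_mulVec_nonneg x)

lemma psd_trans {X Y Z : Matrix n n ℂ} (h1 : (X - Y).PosSemidef) (h2 : (Y - Z).PosSemidef) :
    (X - Z).PosSemidef := by
  have := h1.add h2
  rwa [sub_add_sub_cancel] at this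

/-- Operator monotonicity of the matrix square root. -/
lemma sqrt_mono' {A B : Matrix n n ℂ} (hA : A.PosSemidef) (hB : B.PosSemidef)
    (h : (B - A).PosSemidef) : (hB.sqrt - hA.sqrt).PosSemidef := by
  set S := hA.sqrt with hS
  set T := hB.sqrt with hT
  have hSp : S.PosSemidef := hA.posSemidef_sqrt
  have hTp : T.PosSemidef := hB.posSemidef_sqrt
  have hD : (T - S).IsHermitian := hTp.1.sub hSp.1
  refine hD.posSemidef_iff_eigenvalues_nonneg.mpr fun i => ?_
  by_contra hneg
  push_neg at hneg
  simp only [Pi.zero_apply] at hneg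
  set t := hD.eigenvalues i with ht
  set v : n → ℂ := ⇑(hD.eigenvectorBasis i) with hv
  have hv0 : v ≠ 0 := fun h => hD.eigenvectorBasis.orthonormal.ne_zero i (congrArg (WithLp.toLp 2) h)
  have hev : (T - S) *ᵥ v = (t : ℂ) • v := by
    have := hD.mulVec_eigenvectorBasis i
    rw [RCLike.real_smul_eq_coe_smul (K := ℂ)] at this
    exact this
  have hBA : B - A = T * (T - S) + (T - S) * S := by
    rw [← hB.sqrt_mul_self, ← hA.sqrt_mul_self, ← hS, ← hT]
    noncomm_ring
  have key : (0:ℂ) ≤ (t:ℂ) * (star v ⬝ᵥ T *ᵥ v + star v ⬝ᵥ S *ᵥ v) := by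
    have h1 : star v ⬝ᵥ (T * (T - S)) *ᵥ v = (t:ℂ) * (star v ⬝ᵥ T *ᵥ v) := by
      rw [← mulVec_mulVec, hev, mulVec_smul, dotProduct_smul, smul_eq_mul]
    have h2 : star v ⬝ᵥ ((T - S) * S) *ᵥ v = (t:ℂ) * (star v ⬝ᵥ S *ᵥ v) := by
      rw [← mulVec_mulVec, dotProduct_mulVec, ← hD.eq, ← star_mulVec, hev]
      simp [star_smul, smul_dotProduct, Complex.conj_ofReal, mul_comm]
    calc (0:ℂ) ≤ star v ⬝ᵥ (B - A) *ᵥ v := h.dotProduct_mulVec_nonneg v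
    _ = (t:ℂ) * (star v ⬝ᵥ T *ᵥ v + star v ⬝ᵥ S *ᵥ v) := by
        rw [hBA, add_mulVec, dotProduct_add, h1, h2, mul_add]
  set qT := star v ⬝ᵥ T *ᵥ v with hqT
  set qS := star v ⬝ᵥ S *ᵥ v with hqS
  have hqT0 : (0:ℂ) ≤ qT := hTp.dotProduct_mulVec_nonneg v
  have hqS0 : (0:ℂ) ≤ qS := hSp.dotProduct_mulVec_nonneg v
  have hw0 : (0:ℂ) ≤ qT + qS := add_nonneg hqT0 hqS0
  have hle : (t:ℂ) * (qT + qS) ≤ 0 := by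
    rw [← neg_nonneg, ← neg_mul]
    have : (0:ℂ) ≤ (-t : ℝ) := by
      rw [Complex.zero_le_real]; linarith
    exact mul_nonneg (by push_cast at this ⊢; exact this) hw0
  have hz : (t:ℂ) * (qT + qS) = 0 := le_antisymm hle key
  have htne : (t:ℂ) ≠ 0 := by
    simpa using (by exact_mod_cast hneg.ne : (t:ℂ) ≠ 0)
  have hsum0 : qT + qS = 0 := by
    rcases mul_eq_zero.mp hz with h' | h'
    · exact absurd h' htne
    · exact h'
  have hqTz : qT = 0 := by
    have : qT ≤ 0 := by
      have : qT = -qS := by linear_combination hsum0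
      rw [this]; exact neg_nonpos_of_nonneg hqS0
    exact le_antisymm this hqT0
  have hqSz : qS = 0 := by linear_combination hsum0 - hqTz
  have hTv : T *ᵥ v = 0 := (hTp.dotProduct_mulVec_zero_iff v).mp hqTz
  have hSv : S *ᵥ v = 0 := (hSp.dotProduct_mulVec_zero_iff v).mp hqSz
  have : (t:ℂ) • v = 0 := by rw [← hev, sub_mulVec, hTv, hSv, sub_zero]
  rcases smul_eq_zero.mp this with h' | h'
  · exact htne h'
  · exact hv0 h'

/-- Operator concavity of the square root. -/
lemma sqrt_concave' {A B : Matrix n n ℂ} (hA : A.PosSemidef) (hB : B.PosSemidef)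
    {lam : ℝ} (h0 : 0 ≤ lam) (h1 : lam ≤ 1)
    (hC : ((lam:ℂ) • A + ((1-lam:ℝ):ℂ) • B).PosSemidef) :
    (hC.sqrt - ((lam:ℂ) • hA.sqrt + ((1-lam:ℝ):ℂ) • hB.sqrt)).PosSemidef := by
  set S := hA.sqrt with hS
  set T := hB.sqrt with hT
  have hSp : S.PosSemidef := hA.posSemidef_sqrt
  have hTp : T.PosSemidef := hB.posSemidef_sqrt
  set M : Matrix n n ℂ := (lam:ℂ) • S + ((1-lam:ℝ):ℂ) • T with hM
  have hMp : M.PosSemidef := (psd_smul_real h0 hSp).add (psd_smul_real (by linarith) hTp)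
  have hM2 : (M ^ 2).PosSemidef := hMp.pow 2
  have hgap : ((lam:ℂ) • A + ((1-lam:ℝ):ℂ) • B) - M ^ 2
      = ((lam * (1-lam) : ℝ) : ℂ) • ((S - T)ᴴ * (S - T)) := by
    have hST : (S - T)ᴴ = S - T := (hSp.1.sub hTp.1).eq
    rw [hST, ← hA.sqrt_mul_self, ← hB.sqrt_mul_self, ← hS, ← hT, hM]
    push_cast
    simp only [pow_two, mul_add, add_mul, smul_mul_assoc, mul_smul_comm, smul_smul,
      sub_mul, mul_sub, smul_sub, sub_smul, add_smul]
    module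
  have hgapP : (((lam:ℂ) • A + ((1-lam:ℝ):ℂ) • B) - M ^ 2).PosSemidef := by
    rw [hgap]
    exact psd_smul_real (mul_nonneg h0 (by linarith)) (posSemidef_conjTranspose_mul_self _)
  have hMeq : M = hM2.sqrt := hMp.eq_sqrt_of_sq_eq hM2 rfl
  have := sqrt_mono' hM2 hC hgapP
  rwa [← hMeq] at this

/-- One square-root step on the subtype of PSD matrices. -/
noncomputable def rtStep : {M : Matrix n n ℂ // M.PosSemidef} → {M : Matrix n n ℂ // M.PosSemidef} :=
  fun q => ⟨q.2.sqrt, q.2.posSemidef_sqrt⟩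

noncomputable def rtIter (k : ℕ) (p : {M : Matrix n n ℂ // M.PosSemidef}) :
    {M : Matrix n n ℂ // M.PosSemidef} := rtStep^[k] p

lemma rtIter_succ (k : ℕ) (p : {M : Matrix n n ℂ // M.PosSemidef}) :
    rtIter (k+1) p = rtStep (rtIter k p) := Function.iterate_succ_apply' _ _ _

lemma rtIter_concave (pA pB : {M : Matrix n n ℂ // M.PosSemidef})
    {lam : ℝ} (h0 : 0 ≤ lam) (h1 : lam ≤ 1)
    (pC : {M : Matrix n n ℂ // M.PosSemidef})
    (hCval : pC.1 = (lam:ℂ) • pA.1 + ((1-lam:ℝ):ℂ) • pB.1) (k : ℕ) :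
    ((rtIter k pC).1 - ((lam:ℂ) • (rtIter k pA).1 + ((1-lam:ℝ):ℂ) • (rtIter k pB).1)).PosSemidef := by
  induction k with
  | zero =>
    simp only [rtIter, Function.iterate_zero, id_eq, hCval, sub_self]
    exact Matrix.PosSemidef.zero
  | succ k ih =>
    set P := rtIter k pA with hP
    set Q := rtIter k pB with hQ
    set R := rtIter k pC with hR
    have hmix : ((lam:ℂ) • P.1 + ((1-lam:ℝ):ℂ) • Q.1).PosSemidef :=
      (psd_smul_real h0 P.2).add (psd_smul_real (by linarith) Q.2)
    have step1 := sqrt_concave' P.2 Q.2 h0 h1 hmix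
    have step2 := sqrt_mono' hmix R.2 ih
    have := psd_trans step2 step1
    simpa only [rtIter_succ, rtStep] using this

lemma conj_diag_posSemidef {U : Matrix n n ℂ} {d : n → ℝ} (hd : ∀ i, 0 ≤ d i) :
    (U * diagonal (fun i => ((d i : ℝ) : ℂ)) * star U).PosSemidef := by
  have : (diagonal (fun i => ((d i : ℝ) : ℂ))).PosSemidef :=
    Matrix.PosSemidef.diagonal fun i => by simpa [Complex.zero_le_real] using hd i
  exact this.mul_mul_conjTranspose_same U

lemma sqrt_conj_diag {U : Matrix n n ℂ} (hU : star U * U = 1) {d : n → ℝ} (hd : ∀ i, 0 ≤ d i)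
    (h : (U * diagonal (fun i => ((d i : ℝ) : ℂ)) * star U).PosSemidef) :
    h.sqrt = U * diagonal (fun i => ((Real.sqrt (d i) : ℝ) : ℂ)) * star U := by
  refine ((conj_diag_posSemidef fun i => Real.sqrt_nonneg (d i)).eq_sqrt_of_sq_eq h ?_).symm
  have hdd : diagonal (fun i => ((Real.sqrt (d i) : ℝ) : ℂ)) *
      diagonal (fun i => ((Real.sqrt (d i) : ℝ) : ℂ)) = diagonal (fun i => ((d i : ℝ) : ℂ)) := by
    rw [diagonal_mul_diagonal]
    refine congrArg diagonal (funext fun i => ?_)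
    rw [← Complex.ofReal_mul, Real.mul_self_sqrt (hd i)]
  rw [pow_two]
  calc U * diagonal (fun i => ((Real.sqrt (d i) : ℝ) : ℂ)) * star U *
        (U * diagonal (fun i => ((Real.sqrt (d i) : ℝ) : ℂ)) * star U)
      = U * (diagonal (fun i => ((Real.sqrt (d i) : ℝ) : ℂ)) * (star U * U) *
          diagonal (fun i => ((Real.sqrt (d i) : ℝ) : ℂ))) * star U := by
        simp only [mul_assoc]
    _ = U * diagonal (fun i => ((d i : ℝ) : ℂ)) * star U := by
        rw [hU, mul_one, hdd]

lemma rtIter_formula {X : Matrix n n ℂ} (hX : X.PosSemidef) (k : ℕ) :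
    (rtIter k ⟨X, hX⟩).1 =
      (hX.1.eigenvectorUnitary : Matrix n n ℂ) *
        diagonal (fun i => ((hX.1.eigenvalues i ^ ((2⁻¹:ℝ)^k) : ℝ) : ℂ)) *
        star (hX.1.eigenvectorUnitary : Matrix n n ℂ) := by
  set U : Matrix n n ℂ := (hX.1.eigenvectorUnitary : Matrix n n ℂ) with hUdef
  have hU : star U * U = 1 := mem_unitaryGroup_iff'.mp hX.1.eigenvectorUnitary.2
  induction k with
  | zero =>
    simp only [rtIter, Function.iterate_zero, id_eq, pow_zero, Real.rpow_one]
    simpa [Function.comp_def, hUdef] using hX.1.spectral_theorem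
  | succ k ih =>
    have hdk : ∀ i, 0 ≤ hX.1.eigenvalues i ^ ((2⁻¹:ℝ)^k) :=
      fun i => Real.rpow_nonneg (hX.eigenvalues_nonneg i) _
    have hpsd : (U * diagonal (fun i => ((hX.1.eigenvalues i ^ ((2⁻¹:ℝ)^k) : ℝ) : ℂ)) * star U).PosSemidef :=
      conj_diag_posSemidef hdk
    have hsub : rtIter k ⟨X, hX⟩ = ⟨_, hpsd⟩ := Subtype.ext ih
    have hs : ∀ i, Real.sqrt (hX.1.eigenvalues i ^ ((2⁻¹:ℝ)^k))
        = hX.1.eigenvalues i ^ ((2⁻¹:ℝ)^(k+1)) := fun i => by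
      rw [Real.sqrt_eq_rpow, ← Real.rpow_mul (hX.eigenvalues_nonneg i), pow_succ]
      norm_num
    rw [rtIter_succ, hsub]
    show hpsd.sqrt = _
    rw [sqrt_conj_diag hU hdk hpsd]
    simp only [hs]

lemma scalar_limit {x : ℝ} (hx : 0 < x) :
    Tendsto (fun k : ℕ => (2:ℝ)^k * (x ^ ((2⁻¹:ℝ)^k) - 1)) atTop (𝓝 (Real.log x)) := by
  have hd : HasDerivAt (fun h : ℝ => Real.exp (Real.log x * h)) (Real.log x) 0 := by
    simpa using ((hasDerivAt_id (0:ℝ)).const_mul (Real.log x)).exp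
  have hslope := hasDerivAt_iff_tendsto_slope.mp hd
  have h1 : Tendsto (fun k : ℕ => (2⁻¹:ℝ)^k) atTop (𝓝[≠] 0) := by
    refine tendsto_nhdsWithin_of_tendsto_nhds_of_eventually_within _
      (tendsto_pow_atTop_nhds_zero_of_lt_one (by norm_num) (by norm_num))
      (Eventually.of_forall fun k => ?_)
    exact pow_ne_zero _ (by norm_num)
  have := hslope.comp h1
  refine this.congr fun k => ?_
  have h2 : ((2⁻¹:ℝ)^k) ≠ 0 := pow_ne_zero _ (by norm_num)
  simp only [Function.comp_apply, slope_fun_def_field, mul_zero, Real.exp_zero, sub_zero]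
  rw [← Real.rpow_def_of_pos hx, mul_comm ((2:ℝ)^k), div_eq_mul_inv, ← inv_pow, inv_inv]

/-- The PSD cone is closed under entrywise limits. -/
lemma psd_of_tendsto {D : Matrix n n ℂ} {f : ℕ → Matrix n n ℂ}
    (hf : ∀ k, (f k).PosSemidef) (h : Tendsto f atTop (𝓝 D)) : D.PosSemidef := by
  refine PosSemidef.of_dotProduct_mulVec_nonneg ?_ ?_
  · have hc : Continuous fun M : Matrix n n ℂ => Mᴴ := continuous_id.matrix_conjTranspose
    have h2 : Tendsto (fun k => (f k)ᴴ) atTop (𝓝 Dᴴ) := (hc.tendsto D).comp h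
    have h3 : Tendsto (fun k => (f k)ᴴ) atTop (𝓝 D) := by
      refine h.congr fun k => ?_
      exact ((hf k).1).symm
    exact tendsto_nhds_unique h2 h3
  · intro x
    have hc : Continuous fun M : Matrix n n ℂ => star x ⬝ᵥ M *ᵥ x :=
      continuous_const.dotProduct (continuous_id.matrix_mulVec continuous_const)
    have hq : Tendsto (fun k => star x ⬝ᵥ (f k) *ᵥ x) atTop (𝓝 (star x ⬝ᵥ D *ᵥ x)) :=
      (hc.tendsto D).comp h
    rw [Complex.le_def]
    constructor
    · have := (Complex.continuous_re.tendsto _).comp hq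
      refine le_of_tendsto_of_tendsto' tendsto_const_nhds this fun k => ?_
      exact (Complex.le_def.mp ((hf k).dotProduct_mulVec_nonneg x)).1
    · have := (Complex.continuous_im.tendsto _).comp hq
      have h0 : Tendsto (fun k => ((star x ⬝ᵥ (f k) *ᵥ x).im)) atTop (𝓝 0) := by
        refine tendsto_const_nhds.congr fun k => ?_
        exact ((Complex.le_def.mp ((hf k).dotProduct_mulVec_nonneg x)).2)
      simpa using tendsto_nhds_unique h0 this

lemma tendsto_gmat {ℓ : ℕ} {X : Matrix (Fin ℓ) (Fin ℓ) ℂ} (hX : X.PosDef) :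
    Tendsto (fun k : ℕ => (((2:ℝ)^k : ℝ) : ℂ) • ((rtIter k ⟨X, hX.posSemidef⟩).1 - 1))
      atTop (𝓝 (matLog hX.1)) := by
  set U : Matrix (Fin ℓ) (Fin ℓ) ℂ := (hX.posSemidef.1.eigenvectorUnitary : Matrix (Fin ℓ) (Fin ℓ) ℂ) with hUdef
  set ev : Fin ℓ → ℝ := hX.posSemidef.1.eigenvalues with hev
  have hU1 : U * star U = 1 := mem_unitaryGroup_iff.mp hX.posSemidef.1.eigenvectorUnitary.2
  have hk : ∀ k : ℕ, (((2:ℝ)^k : ℝ) : ℂ) • ((rtIter k ⟨X, hX.posSemidef⟩).1 - 1)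
      = U * Matrix.diagonal (fun i => (((2:ℝ)^k * (ev i ^ ((2⁻¹:ℝ)^k) - 1) : ℝ) : ℂ)) * star U := by
    intro k
    rw [rtIter_formula hX.posSemidef k]
    have hdiag : Matrix.diagonal (fun i => (((2:ℝ)^k * (ev i ^ ((2⁻¹:ℝ)^k) - 1) : ℝ) : ℂ))
        = (((2:ℝ)^k : ℝ) : ℂ) • (Matrix.diagonal (fun i => ((ev i ^ ((2⁻¹:ℝ)^k) : ℝ) : ℂ)) - 1) := by
      rw [← Matrix.diagonal_one, Matrix.diagonal_sub, ← Matrix.diagonal_smul]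
      refine congrArg Matrix.diagonal (funext fun i => ?_)
      push_cast
      simp [mul_sub]
    rw [hdiag, Matrix.mul_smul, Matrix.smul_mul]
    congr 1
    rw [Matrix.mul_sub, Matrix.sub_mul, Matrix.mul_one, hU1]
  have hF : Continuous (fun dv : Fin ℓ → ℂ => U * Matrix.diagonal dv * star U) :=
    (continuous_const.matrix_mul (continuous_id.matrix_diagonal)).matrix_mul continuous_const
  have hdv : Tendsto (fun k : ℕ => (fun i => (((2:ℝ)^k * (ev i ^ ((2⁻¹:ℝ)^k) - 1) : ℝ) : ℂ)))
      atTop (𝓝 (fun i => ((Real.log (ev i) : ℝ) : ℂ))) := by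
    rw [tendsto_pi_nhds]
    intro i
    exact (Complex.continuous_ofReal.tendsto _).comp (scalar_limit (hX.eigenvalues_pos i))
  exact ((hF.tendsto _).comp hdv).congr (fun k => (hk k).symm)

end MatLogAux

open MatLogAux Matrix Filter Topology in
/-- The logarithm is operator concave on positive definite matrices:
`λ·log A + (1-λ)·log B ⪯ log (λA + (1-λ)B)` for `λ ∈ (0,1)`. -/
theorem matLog_operator_concave {ℓ : ℕ}
    (A B : Matrix (Fin ℓ) (Fin ℓ) ℂ)
    (hA : A.PosDef) (hB : B.PosDef)
    (lam : ℝ) (h0 : 0 < lam) (h1 : lam < 1)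
    (hC : ((lam : ℂ) • A + ((1 - lam : ℝ) : ℂ) • B).PosDef) :
    (matLog hC.1 - ((lam : ℂ) • matLog hA.1 + ((1 - lam : ℝ) : ℂ) • matLog hB.1)).PosSemidef := by
  set pA : {M : Matrix (Fin ℓ) (Fin ℓ) ℂ // M.PosSemidef} := ⟨A, hA.posSemidef⟩ with hpA
  set pB : {M : Matrix (Fin ℓ) (Fin ℓ) ℂ // M.PosSemidef} := ⟨B, hB.posSemidef⟩ with hpB
  set pC : {M : Matrix (Fin ℓ) (Fin ℓ) ℂ // M.PosSemidef} :=
    ⟨(lam : ℂ) • A + ((1 - lam : ℝ) : ℂ) • B, hC.posSemidef⟩ with hpC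
  set f : ℕ → Matrix (Fin ℓ) (Fin ℓ) ℂ := fun k =>
    (((2:ℝ)^k : ℝ) : ℂ) • ((rtIter k pC).1 -
      ((lam:ℂ) • (rtIter k pA).1 + ((1-lam:ℝ):ℂ) • (rtIter k pB).1)) with hf
  have hfpsd : ∀ k, (f k).PosSemidef := fun k =>
    psd_smul_real (by positivity) (rtIter_concave pA pB h0.le h1.le pC rfl k)
  have halg : ∀ k, f k =
      (((2:ℝ)^k : ℝ) : ℂ) • ((rtIter k pC).1 - 1) -
        ((lam:ℂ) • ((((2:ℝ)^k : ℝ) : ℂ) • ((rtIter k pA).1 - 1)) +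
         ((1-lam:ℝ):ℂ) • ((((2:ℝ)^k : ℝ) : ℂ) • ((rtIter k pB).1 - 1))) := by
    intro k
    have hlm : ((1-lam:ℝ):ℂ) = 1 - (lam:ℂ) := by push_cast; ring
    rw [hf, hlm]
    module
  have htend : Tendsto f atTop (𝓝 (matLog hC.1 -
      ((lam : ℂ) • matLog hA.1 + ((1 - lam : ℝ) : ℂ) • matLog hB.1))) := by
    have := (tendsto_gmat hC).sub
      (((tendsto_gmat hA).const_smul ((lam:ℂ))).add
        ((tendsto_gmat hB).const_smul (((1-lam:ℝ):ℂ))))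
    exact this.congr fun k => (halg k).symm
  exact psd_of_tendsto hfpsd htend
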